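/- Gilbert-Varshamov bound for the overweight distance: Let R be a finite ring with identity, n a positive integer, and d ∈ {1, ..., 2n}. Then there exists a code C ⊆ R^n whose minimum overweight distance is at least d and which satisfies |C| ≥ |R|^n / |B_{d-1,D}(0)|, where B_{d-1,D}(0) is the overweight ball of radius d-1 around 0 in R^n. -/

import Mathlib

open Classical in
noncomputable def overweight {R : Type*} [Ring R] (x : R) : ℝ :=
  if x = 0 then 0 else if IsUnit x then 1 else 2

noncomputable def overweightN {R : Type*} [Ring R] {n : ℕ} (x : Fin n → R) : ℝ :=
  ∑ i, overweight (x i)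

noncomputable def owDist {R : Type*} [Ring R] {n : ℕ} (x y : Fin n → R) : ℝ :=
  overweightN (x - y)

def owBall {R : Type*} [Ring R] {n : ℕ} (r : ℝ) (x : Fin n → R) : Set (Fin n → R) :=
  {y : Fin n → R | owDist x y ≤ r}

open Classical in
noncomputable def owNat {R : Type*} [Ring R] (x : R) : ℕ :=
  if x = 0 then 0 else if IsUnit x then 1 else 2

lemma overweight_eq_cast {R : Type*} [Ring R] (x : R) :
    overweight x = (owNat x : ℝ) := by
  unfold overweight owNat; split_ifs <;> simp

lemma owDist_eq_cast {R : Type*} [Ring R] {n : ℕ} (x y : Fin n → R) :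
    owDist x y = ((∑ i, owNat ((x - y) i) : ℕ) : ℝ) := by
  unfold owDist overweightN
  push_cast
  simp [overweight_eq_cast]

lemma owDist_self {R : Type*} [Ring R] {n : ℕ} (x : Fin n → R) :
    owDist x x = 0 := by
  unfold owDist overweightN
  simp [overweight]

lemma overweight_neg {R : Type*} [Ring R] (a : R) :
    overweight (-a) = overweight a := by
  unfold overweight
  by_cases h0 : a = 0
  · simp [h0]
  · rw [if_neg (by simpa using h0), if_neg h0]
    by_cases hu : IsUnit a
    · rw [if_pos (by simpa using hu), if_pos hu]
    · rw [if_neg (by simpa using hu), if_neg hu]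

lemma owDist_comm {R : Type*} [Ring R] {n : ℕ} (x y : Fin n → R) :
    owDist x y = owDist y x := by
  unfold owDist overweightN
  apply Finset.sum_congr rfl
  intro i _
  have : (y - x) i = -((x - y) i) := by simp
  rw [this, overweight_neg]

lemma owBall_translate {R : Type*} [Ring R] {n : ℕ} (r : ℝ) (x : Fin n → R) :
    owBall r x = (fun y => y + x) '' owBall r (0 : Fin n → R) := by
  ext y
  simp only [owBall, Set.mem_setOf_eq, Set.mem_image]
  constructor
  · intro h
    refine ⟨y - x, ?_, by abel⟩
    have : owDist (0 : Fin n → R) (y - x) = owDist x y := by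
      unfold owDist; congr 1; abel
    rw [this]; exact h
  · rintro ⟨z, hz, rfl⟩
    have : owDist x (z + x) = owDist (0 : Fin n → R) z := by
      unfold owDist; congr 1; abel
    rw [this]; exact hz

/-- Gilbert–Varshamov bound for the overweight distance: for every `1 ≤ d ≤ 2n`
there is a code `C ⊆ R^n` of minimum overweight distance at least `d` with
`|C| ≥ |R|^n / |B_{d-1,D}(0)|`. -/
theorem gilbert_varshamov_overweight {R : Type*} [Ring R] [Fintype R]
    (n d : ℕ) (hn : 0 < n) (hd1 : 1 ≤ d) (hd2 : d ≤ 2 * n) :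
    ∃ C : Set (Fin n → R),
      (∀ x ∈ C, ∀ y ∈ C, x ≠ y → (d : ℝ) ≤ owDist x y) ∧
      (C.ncard : ℝ) ≥ (Fintype.card R : ℝ) ^ n /
        ((owBall ((d : ℝ) - 1) (0 : Fin n → R)).ncard : ℝ) := by
  classical
  set P : Finset (Fin n → R) → Prop :=
    fun C => ∀ x ∈ C, ∀ y ∈ C, x ≠ y → (d : ℝ) ≤ owDist x y with hPdef
  have hd1R : (1 : ℝ) ≤ (d : ℝ) := by exact_mod_cast hd1
  -- a maximal code
  have hne : ((Finset.univ : Finset (Finset (Fin n → R))).filter P).Nonempty := by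
    refine ⟨{0}, ?_⟩
    simp only [Finset.mem_filter, Finset.mem_univ, true_and, hPdef]
    intro x hx y hy hxy
    simp only [Finset.mem_singleton] at hx hy
    exact absurd (hx.trans hy.symm) hxy
  obtain ⟨C, hCmem, hmax⟩ :=
    ((Finset.univ : Finset (Finset (Fin n → R))).filter P).exists_max_image
      Finset.card hne
  have hCP : P C := (Finset.mem_filter.mp hCmem).2
  -- covering: every point is within distance d-1 of some codeword
  have hcover : ∀ z : Fin n → R, ∃ x ∈ C, owDist x z ≤ (d : ℝ) - 1 := by
    intro z
    by_cases hz : z ∈ C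
    · exact ⟨z, hz, by rw [owDist_self]; linarith⟩
    · have hnotP : ¬ P (insert z C) := by
        intro hP
        have hmem : insert z C ∈ (Finset.univ : Finset (Finset (Fin n → R))).filter P := by
          simp only [Finset.mem_filter, Finset.mem_univ, true_and]
          exact hP
        have := hmax _ hmem
        have hcard : C.card < (insert z C).card := by
          rw [Finset.card_insert_of_notMem hz]; omega
        omega
      simp only [hPdef, not_forall] at hnotP
      obtain ⟨x, hx, y, hy, hxy, hlt⟩ := hnotP
      push_neg at hlt
      -- one of x, y must be z
      have key : ∃ w ∈ C, owDist w z < (d : ℝ) := by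
        rcases Finset.mem_insert.mp hx with rfl | hxC
        · rcases Finset.mem_insert.mp hy with rfl | hyC
          · exact absurd rfl hxy
          · exact ⟨y, hyC, by rwa [owDist_comm]⟩
        · rcases Finset.mem_insert.mp hy with rfl | hyC
          · exact ⟨x, hxC, hlt⟩
          · exact absurd hlt (not_lt.mpr (hCP x hxC y hyC hxy))
      obtain ⟨w, hw, hwlt⟩ := key
      refine ⟨w, hw, ?_⟩
      rw [owDist_eq_cast] at hwlt ⊢
      have : (∑ i, owNat ((w - z) i)) < d := by exact_mod_cast hwlt
      have h2 : (∑ i, owNat ((w - z) i)) ≤ d - 1 := by omega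
      have := (Nat.cast_le (α := ℝ)).mpr h2
      rw [Nat.cast_sub hd1] at this
      simpa using this
  -- cardinalities
  have hball_card : ∀ x : Fin n → R,
      (owBall ((d : ℝ) - 1) x).toFinset.card
        = (owBall ((d : ℝ) - 1) (0 : Fin n → R)).toFinset.card := by
    intro x
    rw [owBall_translate ((d : ℝ) - 1) x]
    rw [Set.toFinset_image]
    rw [Finset.card_image_of_injective _ (fun a b h => by simpa using h)]
  have hcount : Fintype.card (Fin n → R)
      ≤ C.card * (owBall ((d : ℝ) - 1) (0 : Fin n → R)).toFinset.card := by
    have hsub : (Finset.univ : Finset (Fin n → R))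
        ⊆ C.biUnion (fun x => (owBall ((d : ℝ) - 1) x).toFinset) := by
      intro z _
      obtain ⟨x, hx, hle⟩ := hcover z
      exact Finset.mem_biUnion.mpr ⟨x, hx, by rw [Set.mem_toFinset]; exact hle⟩
    calc Fintype.card (Fin n → R)
        = (Finset.univ : Finset (Fin n → R)).card := rfl
      _ ≤ (C.biUnion (fun x => (owBall ((d : ℝ) - 1) x).toFinset)).card :=
          Finset.card_le_card hsub
      _ ≤ ∑ x ∈ C, (owBall ((d : ℝ) - 1) x).toFinset.card :=
          Finset.card_biUnion_le
      _ = C.card * (owBall ((d : ℝ) - 1) (0 : Fin n → R)).toFinset.card := by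
          rw [Finset.sum_congr rfl (fun x _ => hball_card x), Finset.sum_const,
            smul_eq_mul]
  have hballpos : 0 < (owBall ((d : ℝ) - 1) (0 : Fin n → R)).toFinset.card := by
    refine Finset.card_pos.mpr ⟨0, ?_⟩
    rw [Set.mem_toFinset]
    show owDist (0 : Fin n → R) 0 ≤ (d : ℝ) - 1
    rw [owDist_self]; linarith
  refine ⟨↑C, ?_, ?_⟩
  · intro x hx y hy hxy
    exact hCP x (by exact_mod_cast hx) y (by exact_mod_cast hy) hxy
  · have hncardC : (↑C : Set (Fin n → R)).ncard = C.card := Set.ncard_coe_finset C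
    have hncardB : (owBall ((d : ℝ) - 1) (0 : Fin n → R)).ncard
        = (owBall ((d : ℝ) - 1) (0 : Fin n → R)).toFinset.card :=
      Set.ncard_eq_toFinset_card' _
    rw [hncardC, hncardB, ge_iff_le, div_le_iff₀ (by exact_mod_cast hballpos)]
    have : ((Fintype.card R : ℝ)) ^ n = (Fintype.card (Fin n → R) : ℝ) := by
      rw [Fintype.card_fun]
      push_cast
      simp
    rw [this]
    exact_mod_cast hcount
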